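/- Let λ > 0 and let B be a symmetric N×N real matrix with B − λI positive semidefinite (in particular B is positive definite). Then for any b ∈ ℝ^N with ‖b‖ ≤ 1: ‖b‖²_{B^{−1}} ≤ (2 + 2/λ) · ln(1 + ‖b‖²_{B^{−1}}). -/

import Mathlib

set_option autoImplicit false

open Matrix

/-- Lemma 10: for any `λ > 0`, if `B` is symmetric with `B − λI` positive semidefinite and
`‖b‖ ≤ 1` (Euclidean norm), then `‖b‖²_{B⁻¹} ≤ (2 + 2/λ) ln(1 + ‖b‖²_{B⁻¹})`. -/
theorem matrix_norm_log_bound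
    (N : ℕ) (lam : ℝ) (hlam : 0 < lam)
    (B : Matrix (Fin N) (Fin N) ℝ) (hBsym : B.IsSymm)
    (hB : (B - lam • (1 : Matrix (Fin N) (Fin N) ℝ)).PosSemidef)
    (b : Fin N → ℝ) (hb : Real.sqrt (b ⬝ᵥ b) ≤ 1) :
    b ⬝ᵥ B⁻¹.mulVec b ≤ (2 + 2 / lam) * Real.log (1 + b ⬝ᵥ B⁻¹.mulVec b) := by
  -- λ•1 is positive definite
  have hI : (lam • (1 : Matrix (Fin N) (Fin N) ℝ)).PosDef := by
    rw [Matrix.smul_one_eq_diagonal]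
    exact Matrix.posDef_diagonal_iff.mpr fun _ => hlam
  have hBpd : B.PosDef := by
    have hE : B = (lam • (1 : Matrix (Fin N) (Fin N) ℝ)) + (B - lam • 1) := by abel
    rw [hE]
    exact hI.add_posSemidef hB
  have hBinv : (B⁻¹).PosDef := hBpd.inv
  set t : ℝ := b ⬝ᵥ B⁻¹.mulVec b with ht
  have ht0 : 0 ≤ t := by
    have := hBinv.posSemidef.dotProduct_mulVec_nonneg b
    simpa using this
  set y : Fin N → ℝ := B⁻¹.mulVec b with hy
  have hby : B.mulVec y = b := by
    rw [hy, Matrix.mulVec_mulVec, Matrix.mul_nonsing_inv _ hBpd.det_pos.ne'.isUnit,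
      Matrix.one_mulVec]
  -- t = y ⬝ᵥ B y ≥ λ‖y‖²
  have htby : t = b ⬝ᵥ y := rfl
  have hlow : lam * (y ⬝ᵥ y) ≤ t := by
    have h := hB.dotProduct_mulVec_nonneg y
    simp only [star_trivial, Matrix.sub_mulVec, dotProduct_sub,
      Matrix.smul_mulVec, Matrix.one_mulVec, dotProduct_smul,
      smul_eq_mul, sub_nonneg] at h
    have hByy : y ⬝ᵥ B.mulVec y = t := by
      rw [htby, ← hby, dotProduct_comm]
    linarith [hByy ▸ h]
  have hyy0 : 0 ≤ y ⬝ᵥ y := Finset.sum_nonneg fun i _ => mul_self_nonneg _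
  have hbb0 : 0 ≤ b ⬝ᵥ b := Finset.sum_nonneg fun i _ => mul_self_nonneg _
  have hbb1 : b ⬝ᵥ b ≤ 1 := by
    nlinarith [Real.sq_sqrt hbb0, Real.sqrt_nonneg (b ⬝ᵥ b)]
  -- Cauchy–Schwarz
  have hcs2 : t ^ 2 ≤ (b ⬝ᵥ b) * (y ⬝ᵥ y) := by
    rw [htby]
    simpa [dotProduct, sq] using Finset.sum_mul_sq_le_sq_mul_sq Finset.univ b y
  -- deduce t ≤ 1/λ
  have htM : t ≤ 1 / lam := by
    have key : lam * t ^ 2 ≤ t := by nlinarith [hlow, hcs2, hyy0, hbb1]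
    rcases ht0.eq_or_lt with h | h
    · rw [← h]; positivity
    · rw [le_div_iff₀ hlam]
      nlinarith [key, h]
  -- analytic part
  have h1t : (0:ℝ) < 1 + t := by linarith
  have hlog1 : t ≤ (1 + t) * Real.log (1 + t) := by
    have h := Real.log_le_sub_one_of_pos (x := (1 + t)⁻¹) (by positivity)
    rw [Real.log_inv] at h
    have hinv : (1 + t)⁻¹ * (1 + t) = 1 := inv_mul_cancel₀ (ne_of_gt h1t)
    nlinarith [h, h1t]
  have hlognn : 0 ≤ Real.log (1 + t) := Real.log_nonneg (by linarith)
  have hcoef : 1 + t ≤ 2 + 2 / lam := by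
    have h1 : 0 < 1 / lam := by positivity
    have h2 : 2 / lam = 2 * (1 / lam) := by ring
    linarith [htM]
  calc t ≤ (1 + t) * Real.log (1 + t) := hlog1
    _ ≤ (2 + 2 / lam) * Real.log (1 + t) := mul_le_mul_of_nonneg_right hcoef hlognn
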